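/- Let γ : ℝ → ℝ² be a twice continuously differentiable curve parameterized by arc length (i.e. ‖γ'(s)‖ = 1 for all s) whose curvature is bounded by κ ≥ 0 (i.e. ‖γ''(s)‖ ≤ κ for all s). If s_i, s_j ∈ ℝ satisfy κ·|s_j − s_i| ≤ 1, then ‖γ(s_j) − γ(s_i)‖ ≥ (1/2)·|s_j − s_i|. -/

import Mathlib

open intervalIntegral

private lemma icp_aux
    (γ : ℝ → EuclideanSpace ℝ (Fin 2)) (κ : ℝ) (hκ : 0 ≤ κ)
    (hγ : ContDiff ℝ 2 γ)
    (hspeed : ∀ s, ‖deriv γ s‖ = 1)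
    (hcurv : ∀ s, ‖deriv (deriv γ) s‖ ≤ κ)
    (s_i s_j : ℝ) (hle : s_i ≤ s_j) (hsep : κ * (s_j - s_i) ≤ 1) :
    ‖γ s_j - γ s_i‖ ≥ (1 / 2) * (s_j - s_i) := by
  have hdiff : Differentiable ℝ γ := hγ.differentiable (by norm_num)
  have hγ' : ContDiff ℝ (1 + 1) γ := by exact_mod_cast hγ
  have hd1 : ContDiff ℝ 1 (deriv γ) := (contDiff_succ_iff_deriv.mp hγ').2.2
  have hd1diff : Differentiable ℝ (deriv γ) := hd1.differentiable one_ne_zero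
  have hd1cont : Continuous (deriv γ) := hd1.continuous
  -- Lipschitz bound on deriv γ
  have hlip : ∀ s t : ℝ, t ≤ s → ‖deriv γ s - deriv γ t‖ ≤ κ * (s - t) := by
    intro s t hts
    have := norm_image_sub_le_of_norm_deriv_le_segment' (a := t) (b := s)
      (f := deriv γ) (f' := deriv (deriv γ))
      (fun x _ => (hd1diff x).hasDerivAt.hasDerivWithinAt)
      (fun x _ => hcurv x) s (Set.right_mem_Icc.2 hts)
    simpa using this
  set v : EuclideanSpace ℝ (Fin 2) := deriv γ s_i with hv
  have hvnorm : ‖v‖ = 1 := hspeed s_i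
  -- pointwise inner product bound
  have hinner : ∀ s ∈ Set.Icc s_i s_j,
      1 - κ * (s - s_i) ≤ (inner ℝ v (deriv γ s) : ℝ) := by
    intro s hs
    have h1 : ‖deriv γ s - v‖ ≤ κ * (s - s_i) := hlip s s_i hs.1
    have h2 : ‖deriv γ s - v‖ ≤ 2 := by
      calc ‖deriv γ s - v‖ ≤ ‖deriv γ s‖ + ‖v‖ := norm_sub_le _ _
        _ = 2 := by rw [hspeed s, hvnorm]; norm_num
    have h3 : ‖deriv γ s - v‖ ^ 2
        = ‖deriv γ s‖ ^ 2 - 2 * (inner ℝ v (deriv γ s) : ℝ) + ‖v‖ ^ 2 := by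
      rw [norm_sub_sq_real, real_inner_comm]
    rw [hspeed s, hvnorm] at h3
    have h0 : (0:ℝ) ≤ ‖deriv γ s - v‖ := norm_nonneg _
    nlinarith [sq_nonneg (‖deriv γ s - v‖)]
  -- FTC
  have hftc : (∫ s in s_i..s_j, deriv γ s) = γ s_j - γ s_i :=
    integral_deriv_eq_sub (fun x _ => hdiff x) (hd1cont.intervalIntegrable _ _)
  have hii : IntervalIntegrable (deriv γ) MeasureTheory.volume s_i s_j :=
    hd1cont.intervalIntegrable _ _
  have hcomm : (∫ s in s_i..s_j, (inner ℝ v (deriv γ s) : ℝ))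
      = (inner ℝ v (γ s_j - γ s_i) : ℝ) := by
    have := (innerSL ℝ v).intervalIntegral_comp_comm hii
    simpa [hftc] using this
  -- integral comparison
  have hint1 : IntervalIntegrable (fun s => 1 - κ * (s - s_i))
      MeasureTheory.volume s_i s_j :=
    (by continuity : Continuous fun s : ℝ => 1 - κ * (s - s_i)).intervalIntegrable _ _
  have hint2 : IntervalIntegrable (fun s => (inner ℝ v (deriv γ s) : ℝ))
      MeasureTheory.volume s_i s_j :=
    ((continuous_const.inner hd1cont).intervalIntegrable _ _)
  have hmono : (∫ s in s_i..s_j, (1 - κ * (s - s_i)))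
      ≤ ∫ s in s_i..s_j, (inner ℝ v (deriv γ s) : ℝ) :=
    intervalIntegral.integral_mono_on hle hint1 hint2 hinner
  have hcalc : (∫ s in s_i..s_j, (1 - κ * (s - s_i)))
      = (s_j - s_i) - κ * (s_j - s_i) ^ 2 / 2 := by
    have h1 : (∫ s in s_i..s_j, (1 - κ * (s - s_i)))
        = (∫ _s in s_i..s_j, (1:ℝ)) - κ * ∫ s in s_i..s_j, (s - s_i) := by
      have hi2 : IntervalIntegrable (fun s : ℝ => κ * (s - s_i))
          MeasureTheory.volume s_i s_j :=
        (by fun_prop : Continuous fun s : ℝ => κ * (s - s_i)).intervalIntegrable _ _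
      rw [← intervalIntegral.integral_const_mul,
        ← intervalIntegral.integral_sub intervalIntegrable_const hi2]
    have h2 : (∫ s in s_i..s_j, (s - s_i)) = (s_j - s_i) ^ 2 / 2 := by
      have := intervalIntegral.integral_comp_sub_right (a := s_i) (b := s_j)
        (fun x : ℝ => x) s_i
      rw [this, integral_id]
      ring
    rw [h1, h2, intervalIntegral.integral_const, smul_eq_mul]
    ring
  have hCS : (inner ℝ v (γ s_j - γ s_i) : ℝ) ≤ ‖γ s_j - γ s_i‖ := by
    calc (inner ℝ v (γ s_j - γ s_i) : ℝ) ≤ ‖v‖ * ‖γ s_j - γ s_i‖ := real_inner_le_norm _ _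
      _ = ‖γ s_j - γ s_i‖ := by rw [hvnorm, one_mul]
  have hL : 0 ≤ s_j - s_i := sub_nonneg.2 hle
  rw [hcalc] at hmono
  rw [hcomm] at hmono
  nlinarith [hmono, hCS, mul_nonneg hκ hL]

/-- If the arc-length separation of two points on a unit-speed C² planar curve
with curvature bounded by κ is at most one curvature radius (`κ·|s_j - s_i| ≤ 1`),
then the chord length is at least half the arc-length separation. -/
theorem icp_chord_length_half_bound
    (γ : ℝ → EuclideanSpace ℝ (Fin 2)) (κ : ℝ) (hκ : 0 ≤ κ)
    (hγ : ContDiff ℝ 2 γ)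
    (hspeed : ∀ s, ‖deriv γ s‖ = 1)
    (hcurv : ∀ s, ‖deriv (deriv γ) s‖ ≤ κ)
    (s_i s_j : ℝ) (hsep : κ * |s_j - s_i| ≤ 1) :
    ‖γ s_j - γ s_i‖ ≥ (1 / 2) * |s_j - s_i| := by
  rcases le_total s_i s_j with h | h
  · rw [abs_of_nonneg (by linarith)] at hsep ⊢
    exact icp_aux γ κ hκ hγ hspeed hcurv s_i s_j h hsep
  · rw [abs_of_nonpos (by linarith)] at hsep ⊢
    rw [norm_sub_rev]
    have := icp_aux γ κ hκ hγ hspeed hcurv s_j s_i h (by linarith)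
    linarith
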